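/- Let F be a field of prime characteristic p, b ∈ F a nonzero element, t a natural number, and f ∈ F[X] a polynomial with natDegree(f) ≤ t·p satisfying f(X + b) = f(X), i.e. f.comp(X + C b) = f. Then there exists R ∈ F[X] with natDegree(R) ≤ t such that f = R.comp(X^p − C(b^{p−1})·X). -/

import Mathlib

open Polynomial

lemma const_of_invariant {F : Type*} [Field F] (p : ℕ)
    [Fact p.Prime] [CharP F p] (b : F) (hb : b ≠ 0) (r : F[X])
    (hr : r.comp (X + C b) = r) (hdeg : r.natDegree < p) : ∃ c, r = C c := by
  refine ⟨r.eval 0, ?_⟩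
  have heval : ∀ x : F, r.eval (x + b) = r.eval x := by
    intro x
    conv_rhs => rw [← hr]
    simp [eval_comp]
  have key : ∀ k : ℕ, r.eval ((k : F) * b) = r.eval 0 := by
    intro k
    induction k with
    | zero => simp
    | succ n ih => rw [Nat.cast_succ, add_mul, one_mul, heval, ih]
  have hinj : Function.Injective (fun k : Fin p => (k : F) * b) := by
    intro k₁ k₂ h
    have : ((k₁ : ℕ) : F) = ((k₂ : ℕ) : F) := mul_right_cancel₀ hb h
    exact Fin.ext (CharP.natCast_injOn_Iio F p k₁.isLt k₂.isLt this)
  have hz : r - C (r.eval 0) = 0 := by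
    apply eq_zero_of_natDegree_lt_card_of_eval_eq_zero _ hinj
    · intro k
      simp [key k]
    · calc (r - C (r.eval 0)).natDegree ≤ r.natDegree := by
            exact (natDegree_sub_le_iff_left (by simp)).mpr le_rfl
          _ < p := hdeg
          _ = Fintype.card (Fin p) := (Fintype.card_fin p).symm
  linear_combination (norm := ring_nf) hz

lemma q_monic {F : Type*} [Field F] (p : ℕ) [Fact p.Prime] (a : F) :
    Monic (X ^ p - C a * X : F[X]) := by
  apply monic_X_pow_sub
  apply lt_of_le_of_lt (degree_mul_le _ _)
  apply lt_of_le_of_lt (add_le_add degree_C_le degree_X_le)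
  rw [zero_add]
  exact_mod_cast (Fact.out : p.Prime).one_lt

lemma q_invariant {F : Type*} [Field F] (p : ℕ) [Fact p.Prime] [CharP F p] (b : F) :
    (X ^ p - C (b ^ (p - 1)) * X : F[X]).comp (X + C b) = X ^ p - C (b ^ (p - 1)) * X := by
  have hp : p ≠ 0 := (Fact.out : p.Prime).ne_zero
  have h1 : ((X : F[X]) + C b) ^ p = X ^ p + (C b) ^ p := add_pow_char _ _ _
  have h2 : (b ^ (p - 1)) * b = b ^ p := by
    rw [← pow_succ, Nat.sub_add_cancel (Nat.one_le_iff_ne_zero.mpr hp)]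
  simp only [sub_comp, mul_comp, pow_comp, X_comp, C_comp, h1]
  rw [mul_add, ← C_mul, h2, ← C_pow]
  ring

/-- If `F` has prime characteristic `p`, `b ≠ 0` and `f ∈ F[X]` of degree at
most `t·p` satisfies `f(X + b) = f(X)`, then `f = R(X^p - b^{p-1}X)` for some
`R` of degree at most `t`. -/
theorem translation_invariant_poly_eq_comp {F : Type*} [Field F] (p : ℕ)
    [Fact p.Prime] [CharP F p] (b : F) (hb : b ≠ 0) (t : ℕ) (f : F[X])
    (hdeg : f.natDegree ≤ t * p) (hf : f.comp (X + C b) = f) :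
    ∃ R : F[X], R.natDegree ≤ t ∧
      f = R.comp (X ^ p - C (b ^ (p - 1)) * X) := by
  induction t generalizing f with
  | zero =>
    simp only [Nat.zero_mul, Nat.le_zero] at hdeg
    refine ⟨C (f.coeff 0), by simp, ?_⟩
    conv_lhs => rw [eq_C_of_natDegree_le_zero hdeg.le]
    simp
  | succ t ih =>
    set q : F[X] := X ^ p - C (b ^ (p - 1)) * X with hq_def
    have hq : Monic q := q_monic p _
    have hqinv : q.comp (X + C b) = q := q_invariant p b
    have hp0 : 0 < p := (Fact.out : p.Prime).pos
    have hqdeg : q.natDegree = p := by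
      rw [hq_def]
      rw [natDegree_sub_eq_left_of_natDegree_lt, natDegree_X_pow]
      rw [natDegree_X_pow]
      exact lt_of_le_of_lt (natDegree_C_mul_le _ _) (by simpa using (Fact.out : p.Prime).one_lt)
    set Q := f /ₘ q with hQ_def
    set r := f %ₘ q with hr_def
    have hsum : r + q * Q = f := modByMonic_add_div f q
    have hrdeg : r.degree < q.degree := degree_modByMonic_lt f hq
    -- invariance of Q and r
    have huniq : f /ₘ q = Q.comp (X + C b) ∧ f %ₘ q = r.comp (X + C b) := by
      apply div_modByMonic_unique _ _ hq
      constructor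
      · calc r.comp (X + C b) + q * Q.comp (X + C b)
            = (r + q * Q).comp (X + C b) := by rw [add_comp, mul_comp, hqinv]
          _ = f := by rw [hsum, hf]
      · have : (r.comp (X + C b)).degree = r.degree := by
          rcases eq_or_ne r 0 with h | h
          · simp [h]
          · have hc : r.comp (X + C b) ≠ 0 := fun hz => by
              have := congrArg (fun g => g.comp (X - C b)) hz
              simp only [comp_assoc, zero_comp] at this
              apply h
              simpa using this
            rw [degree_eq_natDegree h, degree_eq_natDegree hc, natDegree_comp,
              natDegree_X_add_C, mul_one]
        rw [this]
        exact hrdeg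
    have hQinv : Q.comp (X + C b) = Q := huniq.1.symm
    have hrinv : r.comp (X + C b) = r := huniq.2.symm
    obtain ⟨c, hc⟩ := const_of_invariant p b hb r hrinv (by
      rcases eq_or_ne r 0 with h | h
      · simpa [h] using hp0
      · have := hrdeg
        rw [degree_eq_natDegree h, degree_eq_natDegree hq.ne_zero, hqdeg] at this
        exact_mod_cast this)
    have hQdeg : Q.natDegree ≤ t * p := by
      rw [hQ_def, natDegree_divByMonic f hq, hqdeg]
      rw [Nat.sub_le_iff_le_add]
      rwa [Nat.succ_mul] at hdeg
    obtain ⟨R', hR'deg, hR'⟩ := ih Q hQdeg hQinv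
    refine ⟨R' * X + C c, ?_, ?_⟩
    · apply le_trans (natDegree_add_le _ _)
      simp only [natDegree_C, max_le_iff, Nat.zero_le, and_true]
      exact le_trans (natDegree_mul_le) (by simpa using Nat.add_le_add_right hR'deg 1)
    · rw [add_comp, mul_comp, X_comp, C_comp, ← hR']
      rw [← hsum, hc]
      ring
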